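/- Let A ∈ M_m(ℂ) and B ∈ M_n(ℂ) be Hermitian such that 1 is not an eigenvalue of U_A ⊗ U_B. If H ∈ M_{mn}(ℂ) is Hermitian and U_H = U_A ⊗ U_B, then H = i(U_A* ⊗ I_n - I_m ⊗ U_B)^{-1}(U_A* ⊗ I_n + I_m ⊗ U_B); in particular H is uniquely determined. -/

import Mathlib

open Matrix Kronecker Complex

noncomputable def cayley {n : Type*} [Fintype n] [DecidableEq n]
    (A : Matrix n n ℂ) : Matrix n n ℂ :=
  (A - Complex.I • 1) * (A + Complex.I • 1)⁻¹

lemma herm_unit {ι : Type*} [Fintype ι] [DecidableEq ι] {M : Matrix ι ι ℂ}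
    (hM : M.IsHermitian) {z : ℂ} (hz : z.im ≠ 0) :
    IsUnit (z • (1 : Matrix ι ι ℂ) - M) := by
  rw [Matrix.isUnit_iff_isUnit_det, isUnit_iff_ne_zero]
  intro hdet
  obtain ⟨v, hv0, hv⟩ := (Matrix.exists_mulVec_eq_zero_iff).mpr hdet
  have hMv : M *ᵥ v = z • v := by
    rw [Matrix.sub_mulVec, sub_eq_zero] at hv
    rw [← hv, Matrix.smul_mulVec, Matrix.one_mulVec]
  have hceq : star v ⬝ᵥ v = ((∑ i, Complex.normSq (v i) : ℝ) : ℂ) := by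
    push_cast
    simp [dotProduct, Pi.star_apply, Complex.star_def, Complex.mul_conj, mul_comm]
  have hc0 : star v ⬝ᵥ v ≠ 0 := by
    rw [hceq]
    rw [Complex.ofReal_ne_zero]
    obtain ⟨i, hi⟩ := Function.ne_iff.mp hv0
    have hpos : 0 < ∑ i, Complex.normSq (v i) :=
      Finset.sum_pos' (fun j _ => Complex.normSq_nonneg _)
        ⟨i, Finset.mem_univ i, Complex.normSq_pos.mpr hi⟩
    exact ne_of_gt hpos
  have hcreal : star (star v ⬝ᵥ v) = star v ⬝ᵥ v := by
    rw [hceq]; exact Complex.conj_ofReal _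
  have hd : star (star v ⬝ᵥ (M *ᵥ v)) = star v ⬝ᵥ (M *ᵥ v) := by
    conv_lhs => rw [Matrix.star_dotProduct, star_star, Matrix.star_mulVec, hM.eq]
    exact (Matrix.dotProduct_mulVec _ _ _).symm
  rw [hMv, dotProduct_smul, smul_eq_mul, star_mul', hcreal] at hd
  have hzz : star z = z := mul_right_cancel₀ hc0 hd
  exact hz (Complex.conj_eq_iff_im.mp hzz)

lemma herm_add_unit {ι : Type*} [Fintype ι] [DecidableEq ι] {M : Matrix ι ι ℂ}
    (hM : M.IsHermitian) : IsUnit (M + Complex.I • 1) := by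
  have h := (herm_unit hM (z := -Complex.I) (by simp)).neg
  rw [neg_sub, neg_smul, sub_neg_eq_add] at h
  exact h

lemma herm_sub_unit {ι : Type*} [Fintype ι] [DecidableEq ι] {M : Matrix ι ι ℂ}
    (hM : M.IsHermitian) : IsUnit (M - Complex.I • 1) := by
  have h := (herm_unit hM (z := Complex.I) (by simp)).neg
  rwa [neg_sub] at h

lemma comm_PQ {ι : Type*} [Fintype ι] [DecidableEq ι] (M : Matrix ι ι ℂ) :
    (M + Complex.I • 1) * (M - Complex.I • 1)
      = (M - Complex.I • 1) * (M + Complex.I • 1) := by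
  simp only [mul_sub, sub_mul, mul_add, add_mul, Matrix.mul_smul, Matrix.smul_mul,
    one_mul, mul_one]
  abel

lemma cayley_conjT {ι : Type*} [Fintype ι] [DecidableEq ι] {M : Matrix ι ι ℂ}
    (hM : M.IsHermitian) :
    (cayley M)ᴴ = (M - Complex.I • 1)⁻¹ * (M + Complex.I • 1) := by
  unfold cayley
  rw [Matrix.conjTranspose_mul, Matrix.conjTranspose_nonsing_inv]
  have e1 : (M + Complex.I • (1 : Matrix ι ι ℂ))ᴴ = M - Complex.I • 1 := by
    simp [Matrix.conjTranspose_add, Matrix.conjTranspose_smul, hM.eq, Complex.star_def,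
      Complex.conj_I, sub_eq_add_neg]
  have e2 : (M - Complex.I • (1 : Matrix ι ι ℂ))ᴴ = M + Complex.I • 1 := by
    simp [Matrix.conjTranspose_sub, Matrix.conjTranspose_smul, hM.eq, Complex.star_def,
      Complex.conj_I, sub_eq_add_neg]
  rw [e1, e2]

lemma cayley_unitary_left {ι : Type*} [Fintype ι] [DecidableEq ι] {M : Matrix ι ι ℂ}
    (hM : M.IsHermitian) : (cayley M)ᴴ * cayley M = 1 := by
  have hPd := (Matrix.isUnit_iff_isUnit_det _).mp (herm_add_unit hM)
  have hQd := (Matrix.isUnit_iff_isUnit_det _).mp (herm_sub_unit hM)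
  rw [cayley_conjT hM]
  unfold cayley
  have h2 : (M + Complex.I • 1) * ((M - Complex.I • 1) * (M + Complex.I • 1)⁻¹)
      = M - Complex.I • 1 := by
    rw [← mul_assoc, comm_PQ, mul_assoc, Matrix.mul_nonsing_inv _ hPd, mul_one]
  rw [mul_assoc, h2, Matrix.nonsing_inv_mul _ hQd]

lemma cayley_unitary_right {ι : Type*} [Fintype ι] [DecidableEq ι] {M : Matrix ι ι ℂ}
    (hM : M.IsHermitian) : cayley M * (cayley M)ᴴ = 1 := by
  have hPd := (Matrix.isUnit_iff_isUnit_det _).mp (herm_add_unit hM)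
  have hQd := (Matrix.isUnit_iff_isUnit_det _).mp (herm_sub_unit hM)
  rw [cayley_conjT hM]
  unfold cayley
  have hinv : (M + Complex.I • (1 : Matrix ι ι ℂ))⁻¹ * (M - Complex.I • 1)⁻¹
      = (M - Complex.I • 1)⁻¹ * (M + Complex.I • 1)⁻¹ := by
    rw [← Matrix.mul_inv_rev, ← comm_PQ, Matrix.mul_inv_rev]
  calc (M - Complex.I • 1) * (M + Complex.I • 1)⁻¹
        * ((M - Complex.I • 1)⁻¹ * (M + Complex.I • 1))
      = (M - Complex.I • 1) * ((M + Complex.I • 1)⁻¹ * (M - Complex.I • 1)⁻¹)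
        * (M + Complex.I • 1) := by rw [mul_assoc, mul_assoc, mul_assoc]
    _ = (M - Complex.I • 1) * ((M - Complex.I • 1)⁻¹ * (M + Complex.I • 1)⁻¹)
        * (M + Complex.I • 1) := by rw [hinv]
    _ = ((M - Complex.I • 1) * (M - Complex.I • 1)⁻¹)
        * ((M + Complex.I • 1)⁻¹ * (M + Complex.I • 1)) := by
          rw [mul_assoc, mul_assoc, mul_assoc]
    _ = 1 := by
          rw [Matrix.mul_nonsing_inv _ hQd, Matrix.nonsing_inv_mul _ hPd, one_mul]

theorem stmt_11 {m n : ℕ} (A : Matrix (Fin m) (Fin m) ℂ) (B : Matrix (Fin n) (Fin n) ℂ)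
    (hA : A.IsHermitian) (hB : B.IsHermitian)
    (h1 : (1 : ℂ) ∉ spectrum ℂ (cayley A ⊗ₖ cayley B))
    (H : Matrix (Fin m × Fin n) (Fin m × Fin n) ℂ) (hH : H.IsHermitian)
    (hU : cayley H = cayley A ⊗ₖ cayley B) :
    H = Complex.I • ((((cayley A)ᴴ ⊗ₖ (1 : Matrix (Fin n) (Fin n) ℂ)
        - (1 : Matrix (Fin m) (Fin m) ℂ) ⊗ₖ cayley B))⁻¹ *
      ((cayley A)ᴴ ⊗ₖ (1 : Matrix (Fin n) (Fin n) ℂ)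
        + (1 : Matrix (Fin m) (Fin m) ℂ) ⊗ₖ cayley B)) := by
  set U : Matrix (Fin m × Fin n) (Fin m × Fin n) ℂ := cayley A ⊗ₖ cayley B with hUdef
  set V : Matrix (Fin m × Fin n) (Fin m × Fin n) ℂ
    := (cayley A)ᴴ ⊗ₖ (1 : Matrix (Fin n) (Fin n) ℂ) with hVdef
  have h1' : IsUnit ((1 : Matrix (Fin m × Fin n) (Fin m × Fin n) ℂ) - U) := by
    have := spectrum.notMem_iff.mp h1
    simpa [Algebra.algebraMap_eq_smul_one] using this
  have h1d := (Matrix.isUnit_iff_isUnit_det _).mp h1'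
  have hHPd := (Matrix.isUnit_iff_isUnit_det _).mp (herm_add_unit hH)
  -- key equation
  have key : H - Complex.I • 1 = U * (H + Complex.I • 1) := by
    have h := congrArg (· * (H + Complex.I • 1)) hU
    simp only [cayley] at h
    rwa [mul_assoc, Matrix.nonsing_inv_mul _ hHPd, mul_one] at h
  rw [mul_add, Matrix.mul_smul, mul_one] at key
  have keyH : H = U * H + Complex.I • U + Complex.I • 1 := by
    rw [← key]; abel
  have key2 : ((1 : Matrix (Fin m × Fin n) (Fin m × Fin n) ℂ) - U) * H
      = Complex.I • (1 + U) := by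
    rw [sub_mul, one_mul, smul_add, sub_eq_iff_eq_add]
    nth_rewrite 1 [keyH]
    abel
  have hH_eq : H = ((1 : Matrix (Fin m × Fin n) (Fin m × Fin n) ℂ) - U)⁻¹
      * (Complex.I • (1 + U)) := by
    rw [← key2, ← mul_assoc, Matrix.nonsing_inv_mul _ h1d, one_mul]
  have hV1 : V * U = (1 : Matrix (Fin m) (Fin m) ℂ) ⊗ₖ cayley B := by
    rw [hVdef, hUdef, ← Matrix.mul_kronecker_mul, cayley_unitary_left hA, one_mul]
  have hVmul : V * (cayley A ⊗ₖ (1 : Matrix (Fin n) (Fin n) ℂ)) = 1 := by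
    rw [hVdef, ← Matrix.mul_kronecker_mul, cayley_unitary_left hA, one_mul,
      Matrix.one_kronecker_one]
  have hVd : IsUnit V.det := IsUnit.of_mul_eq_one _
    (by rw [← Matrix.det_mul, hVmul, Matrix.det_one])
  have hsub : V - (1 : Matrix (Fin m) (Fin m) ℂ) ⊗ₖ cayley B = V * (1 - U) := by
    rw [mul_sub, mul_one, hV1]
  have hadd : V + (1 : Matrix (Fin m) (Fin m) ℂ) ⊗ₖ cayley B = V * (1 + U) := by
    rw [mul_add, mul_one, hV1]
  rw [hH_eq, hsub, hadd, Matrix.mul_inv_rev, mul_assoc, ← mul_assoc V⁻¹,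
    Matrix.nonsing_inv_mul _ hVd, one_mul, Matrix.mul_smul]
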